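/- Let C be the elliptic curve over ℚ given by Y² + Y = X³ - X² - 7X + 10. For every natural number n ≥ 1, the point n·(4,-6) obtained by adding the point P = (4,-6) to itself n times under the elliptic curve group law is not the identity; i.e., P = (4,-6) has infinite order in C(ℚ). -/

import Mathlib

/-- The elliptic curve `B : Y² + Y = X³ - X² - 7X + 10` over `ℚ`. -/
def Bcurve : WeierstrassCurve.Affine ℚ :=
  { a₁ := 0, a₂ := -1, a₃ := 1, a₄ := -7, a₆ := 10 }

open WeierstrassCurve.Affine

/-! ### Auxiliary valuation lemmas -/

lemma vne {q : ℚ} {a : ℤ} (h : padicValRat 2 q = a) (ha : a ≠ 0) : q ≠ 0 := by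
  rintro rfl; simp [padicValRat.zero] at h; omega

lemma val_add_left {q r : ℚ} (hq : q ≠ 0) (h : padicValRat 2 q < padicValRat 2 r) :
    q + r ≠ 0 ∧ padicValRat 2 (q + r) = padicValRat 2 q := by
  by_cases hr : r = 0
  · subst hr; simpa using hq
  · have hqr : q + r ≠ 0 := by
      intro h0
      have hq' : q = -r := by linarith [add_eq_zero_iff_eq_neg.mp h0]
      rw [hq', padicValRat.neg] at h
      exact lt_irrefl _ h
    exact ⟨hqr, padicValRat.add_eq_of_lt hqr hq hr h⟩

lemma v2 : padicValRat 2 (2:ℚ) = 1 := padicValRat.self one_lt_two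
lemma v3 : padicValRat 2 (3:ℚ) = 0 := by
  have : ((3:ℕ):ℚ) = (3:ℚ) := by norm_num
  rw [← this, padicValRat.of_nat]; norm_num [padicValNat.eq_zero_of_not_dvd]
lemma v7 : padicValRat 2 (7:ℚ) = 0 := by
  have : ((7:ℕ):ℚ) = (7:ℚ) := by norm_num
  rw [← this, padicValRat.of_nat]; norm_num [padicValNat.eq_zero_of_not_dvd]
lemma v5 : padicValRat 2 (5:ℚ) = 0 := by
  have : ((5:ℕ):ℚ) = (5:ℚ) := by norm_num
  rw [← this, padicValRat.of_nat]; norm_num [padicValNat.eq_zero_of_not_dvd]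
lemma v10 : padicValRat 2 (10:ℚ) = 1 := by
  have : (10:ℚ) = 2 * 5 := by norm_num
  rw [this, padicValRat.mul (by norm_num) (by norm_num), v2, v5]; ring
lemma v54 : padicValRat 2 (5/4 : ℚ) = -2 := by
  have h4 : padicValRat 2 (4:ℚ) = 2 := by
    rw [show (4:ℚ) = 2^2 by norm_num, padicValRat.pow (2:ℚ), v2]
    push_cast
  rw [padicValRat.div (by norm_num) (by norm_num), h4, v5]
  ring

/-! ### The key doubling lemma: doubling decreases the 2-adic valuation of `x` by 2 -/

lemma key {x y : ℚ} (r : ℕ) (hE : Bcurve.Equation x y)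
    (hx : padicValRat 2 x = -(2*(r:ℤ)+2)) :
    y ≠ Bcurve.negY x y ∧
    padicValRat 2 (Bcurve.addX x x (Bcurve.slope x x y y)) = -(2*((r:ℤ)+1)+2) := by
  have hx0 : x ≠ 0 := vne hx (by omega)
  have hx2 : padicValRat 2 (x^2) = -(4*(r:ℤ)+4) := by
    rw [padicValRat.pow x, hx]; push_cast; ring
  have hx3 : padicValRat 2 (x^3) = -(6*(r:ℤ)+6) := by
    rw [padicValRat.pow x, hx]; push_cast; ring
  have h7x : padicValRat 2 (7*x) = -(2*(r:ℤ)+2) := by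
    rw [padicValRat.mul (by norm_num) hx0, v7, hx]; ring
  -- the right-hand side of the equation
  have h1 := val_add_left (pow_ne_zero 3 hx0)
    (q := x^3) (r := -(x^2)) (by rw [padicValRat.neg, hx3, hx2]; omega)
  have h2 := val_add_left h1.1 (q := x^3 + -(x^2)) (r := -(7*x))
    (by rw [padicValRat.neg, h1.2, hx3, h7x]; omega)
  have h3 := val_add_left h2.1 (q := x^3 + -(x^2) + -(7*x)) (r := 10)
    (by rw [h2.2, h1.2, hx3, v10]; omega)
  have hR : padicValRat 2 (x^3 + -(x^2) + -(7*x) + 10) = -(6*(r:ℤ)+6) := by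
    rw [h3.2, h2.2, h1.2, hx3]
  have hEq : y^2 + y = x^3 + -(x^2) + -(7*x) + 10 := by
    have := (Bcurve.equation_iff x y).mp hE
    simp only [Bcurve] at this
    linarith
  -- valuation of y
  have hy : padicValRat 2 y = -(3*(r:ℤ)+3) := by
    rcases lt_or_ge (padicValRat 2 y) 0 with hneg | hpos
    · have hy0 : y ≠ 0 := by rintro rfl; simp [padicValRat.zero] at hneg
      have hyy : padicValRat 2 (y^2) = 2 * padicValRat 2 y := by
        rw [padicValRat.pow y]; push_cast; ring
      have h4 := val_add_left (pow_ne_zero 2 hy0) (q := y^2) (r := y) (by omega)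
      rw [hEq, hR] at h4
      omega
    · exfalso
      have hne : y^2 + y ≠ 0 := by rw [hEq]; exact h3.1
      have hym : (0:ℤ) ≤ padicValRat 2 (y^2) := by
        by_cases hy0 : y = 0
        · simp [hy0, padicValRat.zero]
        · rw [padicValRat.pow y]; positivity
      have := padicValRat.min_le_padicValRat_add (p := 2) hne
      rw [hEq, hR] at this
      omega
  have hy0 : y ≠ 0 := vne hy (by omega)
  have hnegY : Bcurve.negY x y = -y - 1 := by
    simp [WeierstrassCurve.Affine.negY, Bcurve]
  have hyne : y ≠ Bcurve.negY x y := by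
    rw [hnegY]
    intro hcon
    have : y = -(2:ℚ)⁻¹ := by linarith
    rw [this, padicValRat.neg, padicValRat.inv, v2] at hy
    omega
  refine ⟨hyne, ?_⟩
  -- the slope of the tangent line
  have h2y : padicValRat 2 (2*y) = -(3*(r:ℤ)+2) := by
    rw [padicValRat.mul (by norm_num) hy0, v2, hy]; ring
  have hden := val_add_left (vne h2y (by omega)) (q := 2*y) (r := 1)
    (by rw [h2y, padicValRat.one]; omega)
  have h3x2 : padicValRat 2 (3*x^2) = -(4*(r:ℤ)+4) := by
    rw [padicValRat.mul (by norm_num) (pow_ne_zero 2 hx0), v3, hx2]; ring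
  have hn1 := val_add_left (vne h3x2 (by omega)) (q := 3*x^2) (r := -(2*x))
    (by rw [padicValRat.neg, padicValRat.mul (by norm_num) hx0, v2, h3x2, hx]; omega)
  have hnum := val_add_left hn1.1 (q := 3*x^2 + -(2*x)) (r := -7)
    (by rw [padicValRat.neg, v7, hn1.2, h3x2]; omega)
  have hslope : Bcurve.slope x x y y = (3*x^2 + -(2*x) + -7) / (2*y + 1) := by
    rw [slope_of_Y_ne rfl hyne, hnegY]
    simp only [Bcurve]
    ring
  have hL : padicValRat 2 (Bcurve.slope x x y y) = -((r:ℤ)+2) := by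
    rw [hslope, padicValRat.div hnum.1 hden.1, hnum.2, hn1.2, h3x2, hden.2, h2y]
    ring
  have hL0 : Bcurve.slope x x y y ≠ 0 := vne hL (by omega)
  have hL2 : padicValRat 2 ((Bcurve.slope x x y y)^2) = -(2*(r:ℤ)+4) := by
    rw [padicValRat.pow (Bcurve.slope x x y y), hL]; push_cast; ring
  have h2x : padicValRat 2 (-(2*x)) = -(2*(r:ℤ)+1) := by
    rw [padicValRat.neg, padicValRat.mul (by norm_num) hx0, v2, hx]; omega
  have ha1 := val_add_left (vne h2x (by omega)) (q := -(2*x)) (r := 1)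
    (by rw [h2x, padicValRat.one]; omega)
  have haddX : Bcurve.addX x x (Bcurve.slope x x y y)
      = (Bcurve.slope x x y y)^2 + (-(2*x) + 1) := by
    simp only [WeierstrassCurve.Affine.addX, Bcurve]
    ring
  rw [haddX]
  have hfin := val_add_left (pow_ne_zero 2 hL0) (q := (Bcurve.slope x x y y)^2)
    (r := -(2*x) + 1)
    (by rw [hL2, ha1.2, h2x]; omega)
  rw [hfin.2, hL2]; ring

/-! ### Concrete point computations -/

lemma some_congr {F : Type*} [Field F] {W : WeierstrassCurve.Affine F} {x₁ y₁ x₂ y₂ : F}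
    (hx : x₁ = x₂) (hy : y₁ = y₂) (h₁ : W.Nonsingular x₁ y₁) :
    ∃ h₂ : W.Nonsingular x₂ y₂, Point.some _ _ h₁ = Point.some _ _ h₂ := by
  subst hx; subst hy; exact ⟨h₁, rfl⟩

lemma x_of_some_eq {F : Type*} [Field F] {W : WeierstrassCurve.Affine F} {x₁ y₁ x₂ y₂ : F}
    {h₁ : W.Nonsingular x₁ y₁} {h₂ : W.Nonsingular x₂ y₂}
    (h : Point.some _ _ h₁ = Point.some _ _ h₂) : x₁ = x₂ := by
  injection h

lemma hP : Bcurve.Nonsingular 4 (-6) := by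
  rw [nonsingular_iff, equation_iff]
  norm_num [Bcurve]

lemma hyP : (-6 : ℚ) ≠ Bcurve.negY 4 (-6) := by norm_num [negY, Bcurve]

/-- `2 • P = (2, -1)`. -/
lemma two_smul_P : ∃ h₂ : Bcurve.Nonsingular 2 (-1),
    Point.some _ _ hP + Point.some _ _ hP = Point.some _ _ h₂ := by
  rw [Point.add_self_of_Y_ne hyP]
  exact some_congr
    (by rw [slope_of_Y_ne rfl hyP]; norm_num [Bcurve, addX, negY])
    (by rw [slope_of_Y_ne rfl hyP]; norm_num [Bcurve, addX, addY, negAddY, negY])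
    _

/-- `3 • P = (5/4, -15/8)`. -/
lemma three_smul_P : ∃ h₃ : Bcurve.Nonsingular (5/4) (-15/8),
    (3 : ℕ) • Point.some _ _ hP = Point.some _ _ h₃ := by
  obtain ⟨h₂, e₂⟩ := two_smul_P
  have e3 : (3 : ℕ) • Point.some _ _ hP = (Point.some _ _ hP + Point.some _ _ hP) + Point.some _ _ hP := by
    rw [show (3:ℕ) = 2 + 1 from rfl, succ_nsmul, two_nsmul]
  rw [e3, e₂, Point.add_of_X_ne (by norm_num : (2:ℚ) ≠ 4)]
  exact some_congr
    (by rw [slope_of_X_ne (by norm_num : (2:ℚ) ≠ 4)]; norm_num [Bcurve, addX])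
    (by rw [slope_of_X_ne (by norm_num : (2:ℚ) ≠ 4)];
        norm_num [Bcurve, addX, addY, negAddY, negY])
    _

/-! ### Main theorem -/

/-- The point `P = (4, -6)` is a (nonsingular) rational point on
`Y² + Y = X³ - X² - 7X + 10`, and for every `n ≥ 1` the multiple `n • P` is not the
identity; i.e. `P` has infinite order in the group of rational points. -/
theorem stmt_9 :
    ∃ h : Bcurve.Nonsingular 4 (-6),
      ∀ n : ℕ, 1 ≤ n → n • (WeierstrassCurve.Affine.Point.some _ _ h) ≠ 0 := by
  refine ⟨hP, ?_⟩
  intro n hn h0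
  -- the invariant: `(3 * 2 ^ k) • P` has `x`-coordinate of 2-adic valuation `-(2k+2)`
  have inv : ∀ k : ℕ, ∃ (x y : ℚ) (h : Bcurve.Nonsingular x y),
      ((3 * 2 ^ k : ℕ) • Point.some _ _ hP = Point.some _ _ h) ∧
        padicValRat 2 x = -(2*(k:ℤ)+2) := by
    intro k
    induction k with
    | zero =>
      obtain ⟨h₃, e₃⟩ := three_smul_P
      exact ⟨5/4, -15/8, h₃, by simpa using e₃, by rw [v54]; ring⟩
    | succ k ih =>
      obtain ⟨x, y, h, he, hv⟩ := ih
      have hE : Bcurve.Equation x y := ((Bcurve.nonsingular_iff' x y).mp h).1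
      have hk := key k hE hv
      have e2 : ((3 * 2 ^ (k+1) : ℕ)) • Point.some _ _ hP = Point.some _ _ h + Point.some _ _ h := by
        rw [show (3 * 2 ^ (k+1) : ℕ) = 2 * (3 * 2 ^ k) by ring, mul_smul, two_nsmul, he]
      refine ⟨_, _, WeierstrassCurve.Affine.nonsingular_add h h (fun hxy => hk.1 hxy.2),
        ?_, ?_⟩
      · rw [e2, Point.add_self_of_Y_ne hk.1]
      · rw [hk.2]; push_cast; ring
  -- if `n • P = 0`, two distinct multiples `(3 * 2 ^ k) • P` coincide: contradiction
  haveI : NeZero n := ⟨by omega⟩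
  have step : ∀ a b : ℕ, a ≤ b → ((3 * 2 ^ a : ℕ) : ZMod n) = ((3 * 2 ^ b : ℕ) : ZMod n) →
      (3 * 2 ^ b : ℕ) • (Point.some _ _ hP) = (3 * 2 ^ a : ℕ) • (Point.some _ _ hP) := by
    intro a b hab hcast
    have hmod : (3 * 2 ^ a) ≡ (3 * 2 ^ b) [MOD n] := (ZMod.natCast_eq_natCast_iff _ _ _).mp hcast
    have hle : 3 * 2 ^ a ≤ 3 * 2 ^ b :=
      Nat.mul_le_mul_left 3 (Nat.pow_le_pow_right (by norm_num) hab)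
    obtain ⟨c, hc⟩ := (Nat.modEq_iff_dvd' hle).mp hmod
    have hb : 3 * 2 ^ b = 3 * 2 ^ a + c * n := by rw [Nat.mul_comm c n]; omega
    rw [hb, add_nsmul, mul_smul c n (Point.some _ _ hP), h0, nsmul_zero, add_zero]
  have final : ∀ a b : ℕ, a < b →
      ((3 * 2 ^ a : ℕ) : ZMod n) = ((3 * 2 ^ b : ℕ) : ZMod n) → False := by
    intro a b hab hcast
    obtain ⟨x1, y1, h1, e1, hv1⟩ := inv a
    obtain ⟨x2, y2, h2, e2, hv2⟩ := inv b
    have heq := step a b hab.le hcast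
    rw [e1, e2] at heq
    have hx := x_of_some_eq heq
    rw [hx] at hv2
    omega
  obtain ⟨k, k', hne, he⟩ := Finite.exists_ne_map_eq_of_infinite
    (fun k : ℕ => ((3 * 2 ^ k : ℕ) : ZMod n))
  rcases hne.lt_or_gt with hlt | hlt
  · exact final k k' hlt he
  · exact final k' k hlt he.symm
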